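/- Bridge edges carry the entire dipole current and induce no current elsewhere. Let V be a finite type, K : V → V → ℝ a symmetric nonnegative weight function with zero diagonal whose support graph G is connected, and let a ≠ b be adjacent vertices (K a b > 0) such that the edge {a,b} is a bridge of G, i.e., deleting the edge {a,b} from G disconnects a from b. Let I be a real number and suppose x : V → ℝ satisfies L(K) *ᵥ x = I · (e_b − e_a). Then for every pair of adjacent vertices i, j with {i,j} ≠ {a,b}, we have x i = x j (zero current across every other edge), and the full current flows through the bridge: K a b · (x b − x a) = I. -/

import Mathlib

open Matrix

/-- The weighted Laplacian matrix of a weight function `K`: diagonal entries are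
`∑ k, K i k`, off-diagonal entries are `-K i j`. -/
def weightedLaplacian {V : Type*} [Fintype V] [DecidableEq V] (K : V → V → ℝ) :
    Matrix V V ℝ :=
  Matrix.of fun i j => if i = j then ∑ k, K i k else -K i j

/-- The support graph of a weight function `K`: `i` and `j` are adjacent iff `i ≠ j`
and `K i j > 0` (for symmetric `K`). -/
def supportGraph {V : Type*} (K : V → V → ℝ) : SimpleGraph V :=
  SimpleGraph.fromRel fun i j => 0 < K i j

/-- Bridge edges carry the entire dipole current and induce no current elsewhere: if the
edge `{a,b}` is a bridge of the connected support graph and `L(K) x = I • (e_b - e_a)`,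
then `x i = x j` across every other edge (zero current), and the full current flows
through the bridge: `K a b (x b - x a) = I`. -/
theorem bridge_carries_full_dipole_current
    {V : Type*} [Fintype V] [DecidableEq V] (K : V → V → ℝ)
    (hsymm : ∀ i j, K i j = K j i) (hnonneg : ∀ i j, 0 ≤ K i j)
    (hdiag : ∀ i, K i i = 0) (hconn : (supportGraph K).Connected)
    (a b : V) (hab : a ≠ b) (hKab : 0 < K a b)
    (hbridge : (supportGraph K).IsBridge s(a, b))
    (I : ℝ) (x : V → ℝ)
    (hx : (weightedLaplacian K).mulVec x = I • (Pi.single b 1 - Pi.single a 1)) :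
    (∀ i j : V, (supportGraph K).Adj i j → s(i, j) ≠ s(a, b) → x i = x j) ∧
    K a b * (x b - x a) = I := by
  classical
  -- the Laplacian applied to x, rewritten edgewise
  have hmv : ∀ i, (weightedLaplacian K).mulVec x i = ∑ j, K i j * (x i - x j) := by
    intro i
    have hterm : ∀ j, (if i = j then ∑ k, K i k else -K i j) * x j
        = (if i = j then (∑ k, K i k) * x i else 0) - K i j * x j := by
      intro j
      by_cases h : i = j
      · subst h; simp [hdiag i]
      · simp [h]
    simp only [Matrix.mulVec, dotProduct, weightedLaplacian, Matrix.of_apply]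
    rw [Finset.sum_congr rfl fun j _ => hterm j, Finset.sum_sub_distrib,
      Finset.sum_ite_eq Finset.univ i (fun _ => (∑ k, K i k) * x i)]
    simp only [Finset.mem_univ, if_true]
    rw [Finset.sum_congr rfl (fun j _ => mul_sub (K i j) (x i) (x j)),
      Finset.sum_sub_distrib, ← Finset.sum_mul]
  have hanti : ∀ i j, K i j * (x i - x j) = -(K j i * (x j - x i)) := by
    intro i j; rw [hsymm i j]; ring
  -- the cut argument: set of vertices reachable from a after deleting the bridge
  have hbr : ¬ (supportGraph K \ SimpleGraph.fromEdgeSet {s(a, b)}).Reachable a b :=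
    (SimpleGraph.isBridge_iff).mp hbridge
  set G' := supportGraph K \ SimpleGraph.fromEdgeSet {s(a, b)} with hG'
  set T : Finset V := Finset.univ.filter (fun v => G'.Reachable a v) with hT
  have haT : a ∈ T := by simp [hT]
  have hbT : b ∉ T := by simpa [hT] using hbr
  have key : ∀ i j : V, i ∈ T → j ∉ T → (i, j) ≠ (a, b) → K i j = 0 := by
    intro i j hi hj hne
    by_contra h
    have hK : 0 < K i j := lt_of_le_of_ne (hnonneg i j) (Ne.symm h)
    have hij : i ≠ j := by rintro rfl; exact hj hi
    have hadj : (supportGraph K).Adj i j := by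
      simp only [supportGraph, SimpleGraph.fromRel_adj]
      exact ⟨hij, Or.inl hK⟩
    have hs : s(i, j) ≠ s(a, b) := by
      intro hs
      rcases Sym2.eq_iff.mp hs with ⟨rfl, rfl⟩ | ⟨rfl, rfl⟩
      · exact hne rfl
      · exact hj haT
    have hadj' : G'.Adj i j := by
      rw [hG']
      simp only [SimpleGraph.sdiff_adj, SimpleGraph.fromEdgeSet_adj,
        Set.mem_singleton_iff]
      exact ⟨hadj, fun hc => hs hc.1⟩
    have hri : G'.Reachable a i := by simpa [hT] using hi
    exact hj (by simp [hT]; exact hri.trans hadj'.reachable)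
  -- sum of the equation over T
  have hsum : ∑ i ∈ T, ∑ j, K i j * (x i - x j) = -I := by
    have h1 : ∑ i ∈ T, (weightedLaplacian K).mulVec x i
        = ∑ i ∈ T, (I • (Pi.single b 1 - Pi.single a 1) : V → ℝ) i := by rw [hx]
    have h2 : ∑ i ∈ T, (I • (Pi.single b 1 - Pi.single a 1) : V → ℝ) i = -I := by
      simp only [Pi.smul_apply, Pi.sub_apply, smul_eq_mul, Pi.single_apply]
      rw [Finset.sum_congr rfl (fun i _ => mul_sub I _ _), Finset.sum_sub_distrib]
      simp [Finset.sum_ite_eq', haT, hbT]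
    calc ∑ i ∈ T, ∑ j, K i j * (x i - x j)
        = ∑ i ∈ T, (weightedLaplacian K).mulVec x i :=
          Finset.sum_congr rfl fun i _ => (hmv i).symm
      _ = -I := by rw [h1]; exact h2
  have hsplit : ∀ i, (∑ j, K i j * (x i - x j))
      = ∑ j ∈ T, K i j * (x i - x j) + ∑ j ∈ Tᶜ, K i j * (x i - x j) :=
    fun i => (Finset.sum_add_sum_compl T _).symm
  have hA : ∑ i ∈ T, ∑ j ∈ T, K i j * (x i - x j) = 0 := by
    have h1 : (∑ i ∈ T, ∑ j ∈ T, K i j * (x i - x j))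
        = ∑ j ∈ T, ∑ i ∈ T, K i j * (x i - x j) := Finset.sum_comm
    have h2 : (∑ j ∈ T, ∑ i ∈ T, K i j * (x i - x j))
        = -∑ i ∈ T, ∑ j ∈ T, K i j * (x i - x j) := by
      rw [← Finset.sum_neg_distrib]
      refine Finset.sum_congr rfl fun j _ => ?_
      rw [← Finset.sum_neg_distrib]
      exact Finset.sum_congr rfl fun i _ => hanti i j
    linarith
  have hC : ∑ i ∈ T, ∑ j ∈ Tᶜ, K i j * (x i - x j) = K a b * (x a - x b) := by
    rw [← Finset.sum_product']
    refine Finset.sum_eq_single_of_mem (a, b)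
      (Finset.mem_product.mpr ⟨haT, Finset.mem_compl.mpr hbT⟩) ?_
    intro p hp hne
    obtain ⟨h1, h2⟩ := Finset.mem_product.mp hp
    have := key p.1 p.2 h1 (Finset.mem_compl.mp h2) hne
    simp [this]
  have part2 : K a b * (x b - x a) = I := by
    have hcut : K a b * (x a - x b) = -I := by
      rw [Finset.sum_congr rfl (fun i _ => hsplit i), Finset.sum_add_distrib, hA, hC]
        at hsum
      linarith
    linear_combination -hcut
  -- the energy argument
  have henergy : ∑ i, x i * ((weightedLaplacian K).mulVec x i) = I * (x b - x a) := by
    rw [hx]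
    have hterm : ∀ i, x i * ((I • (Pi.single b 1 - Pi.single a 1) : V → ℝ) i)
        = (if i = b then x b * I else 0) - (if i = a then x a * I else 0) := by
      intro i
      simp only [Pi.smul_apply, Pi.sub_apply, smul_eq_mul, Pi.single_apply]
      rcases eq_or_ne i b with rfl | h1
      · rw [if_pos rfl, if_pos rfl, if_neg (Ne.symm hab), if_neg (Ne.symm hab)]; ring
      · rcases eq_or_ne i a with rfl | h2
        · rw [if_neg h1, if_neg h1, if_pos rfl, if_pos rfl]; ring
        · rw [if_neg h1, if_neg h1, if_neg h2, if_neg h2]; ring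
    rw [Finset.sum_congr rfl fun i _ => hterm i, Finset.sum_sub_distrib]
    simp [Finset.sum_ite_eq']
    ring
  have hBsum : ∑ i, x i * ((weightedLaplacian K).mulVec x i)
      = ∑ i, ∑ j, x i * (K i j * (x i - x j)) := by
    refine Finset.sum_congr rfl fun i _ => ?_
    rw [hmv i, Finset.mul_sum]
  have hswap : (∑ i, ∑ j, x j * (K i j * (x j - x i)))
      = ∑ i, ∑ j, x i * (K i j * (x i - x j)) := by
    rw [Finset.sum_comm]
    exact Finset.sum_congr rfl fun i _ => Finset.sum_congr rfl fun j _ => by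
      rw [hsymm j i]
  have hdouble : ∑ i, ∑ j, K i j * (x i - x j) ^ 2
      = 2 * ∑ i, ∑ j, x i * (K i j * (x i - x j)) := by
    calc ∑ i, ∑ j, K i j * (x i - x j) ^ 2
        = ∑ i, ∑ j, (x i * (K i j * (x i - x j)) + x j * (K i j * (x j - x i))) :=
          Finset.sum_congr rfl fun i _ => Finset.sum_congr rfl fun j _ => by ring
      _ = (∑ i, ∑ j, x i * (K i j * (x i - x j)))
          + ∑ i, ∑ j, x j * (K i j * (x j - x i)) := by
          simp only [Finset.sum_add_distrib]
      _ = 2 * ∑ i, ∑ j, x i * (K i j * (x i - x j)) := by rw [hswap]; ring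
  have htotal : ∑ i, ∑ j, K i j * (x i - x j) ^ 2 = 2 * (K a b * (x b - x a) ^ 2) := by
    rw [hdouble, ← hBsum, henergy, ← part2]; ring
  have htot' : ∑ p : V × V, K p.1 p.2 * (x p.1 - x p.2) ^ 2
      = 2 * (K a b * (x b - x a) ^ 2) := by
    rw [Fintype.sum_prod_type]; exact htotal
  have hP : ∑ p ∈ ({(a, b), (b, a)} : Finset (V × V)), K p.1 p.2 * (x p.1 - x p.2) ^ 2
      = 2 * (K a b * (x b - x a) ^ 2) := by
    rw [Finset.sum_pair (by intro h; exact hab (congrArg Prod.fst h))]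
    rw [hsymm b a]; ring
  have hcompl : ∑ p ∈ ({(a, b), (b, a)} : Finset (V × V))ᶜ,
      K p.1 p.2 * (x p.1 - x p.2) ^ 2 = 0 := by
    have h := Finset.sum_add_sum_compl ({(a, b), (b, a)} : Finset (V × V))
      (fun p => K p.1 p.2 * (x p.1 - x p.2) ^ 2)
    rw [hP, htot'] at h
    linarith
  have hzero : ∀ p ∈ ({(a, b), (b, a)} : Finset (V × V))ᶜ,
      K p.1 p.2 * (x p.1 - x p.2) ^ 2 = 0 :=
    (Finset.sum_eq_zero_iff_of_nonneg
      (fun p _ => mul_nonneg (hnonneg _ _) (sq_nonneg _))).mp hcompl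
  refine ⟨?_, part2⟩
  intro i j hadj hs
  have hmem : (i, j) ∈ ({(a, b), (b, a)} : Finset (V × V))ᶜ := by
    simp only [Finset.mem_compl, Finset.mem_insert, Finset.mem_singleton]
    push_neg
    constructor
    · intro h; apply hs; rw [Prod.mk.injEq] at h; rw [h.1, h.2]
    · intro h; apply hs; rw [Prod.mk.injEq] at h; rw [h.1, h.2, Sym2.eq_swap]
  have h0 := hzero (i, j) hmem
  have hK : 0 < K i j := by
    simp only [supportGraph, SimpleGraph.fromRel_adj] at hadj
    rcases hadj.2 with h | h
    · exact h
    · rwa [hsymm]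
  have hsq : (x i - x j) ^ 2 = 0 := by
    rcases mul_eq_zero.mp h0 with h | h
    · exact absurd h (ne_of_gt hK)
    · exact h
  have := sq_eq_zero_iff.mp hsq
  linarith
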